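/- For α ∈ (0,1] there exists P such that for all p ≥ P and all integers η ∈ [i_p, s_p), one has 2^{−(α+1)} ≤ ⌊i_p^α⌋ / η^α ≤ 1. In particular the interval length β(p) is comparable to |η|^α uniformly over η ∈ I_p, i.e. the partition is an α-covering. -/

import Mathlib

open MeasureTheory Complex Real

noncomputable def iS (α : ℝ) : ℕ → ℕ × ℕ
  | 0 => (0, 1)
  | p + 1 => ((iS α p).2, (iS α p).2 + ⌊((iS α p).2 : ℝ) ^ α⌋₊)

/-- `i_p`, the left endpoint of the `p`-th interval. -/
noncomputable def ip (α : ℝ) (p : ℕ) : ℕ := (iS α p).1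
/-- `s_p`, the right endpoint of the `p`-th interval. -/
noncomputable def sp (α : ℝ) (p : ℕ) : ℕ := (iS α p).2
/-- `β(p) = s_p - i_p`, the width of the `p`-th interval. -/
noncomputable def βp (α : ℝ) (p : ℕ) : ℕ := sp α p - ip α p

/-- The α-DOST basis function `B_{p,τ}`. -/
noncomputable def B (α : ℝ) (p τ : ℕ) (t : ℝ) : ℂ :=
  ((βp α p : ℝ) ^ (-(1:ℝ)/2) : ℝ) *
    ∑ η ∈ Finset.Ico (ip α p) (sp α p),
      Complex.exp (2 * π * Complex.I * η * (t - τ / (βp α p : ℝ)))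

lemma sp_pos (α : ℝ) (p : ℕ) : 1 ≤ sp α p := by
  induction p with
  | zero => simp [sp, iS]
  | succ n ih =>
    have : sp α (n+1) = sp α n + ⌊((sp α n : ℝ)) ^ α⌋₊ := rfl
    omega

lemma ip_succ (α : ℝ) (p : ℕ) : ip α (p+1) = sp α p := rfl

lemma sp_succ (α : ℝ) (p : ℕ) :
    sp α (p+1) = ip α (p+1) + ⌊((ip α (p+1) : ℝ)) ^ α⌋₊ := rfl

/-- the partition is an α-covering: `β(p) ≍ η^α` on `I_p`, eventually in `p`. -/
theorem alpha_covering (α : ℝ) (hα : α ∈ Set.Ioc (0:ℝ) 1) :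
    ∃ P : ℕ, ∀ p : ℕ, P ≤ p → ∀ η ∈ Finset.Ico (ip α p) (sp α p),
      (2:ℝ) ^ (-(α + 1)) ≤ (⌊((ip α p : ℝ)) ^ α⌋₊ : ℝ) / (η : ℝ) ^ α ∧
        (⌊((ip α p : ℝ)) ^ α⌋₊ : ℝ) / (η : ℝ) ^ α ≤ 1 := by
  obtain ⟨hα0, hα1⟩ := hα
  refine ⟨1, ?_⟩
  intro p hp η hη
  obtain ⟨q, rfl⟩ : ∃ q, p = q + 1 := ⟨p - 1, by omega⟩
  rw [Finset.mem_Ico] at hη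
  obtain ⟨hηl, hηr⟩ := hη
  set i := ip α (q+1) with hi
  have hi1 : 1 ≤ i := by rw [hi, ip_succ]; exact sp_pos α q
  have hi1R : (1:ℝ) ≤ (i:ℝ) := by exact_mod_cast hi1
  set x := ((i:ℝ)) ^ α with hx
  have hx1 : (1:ℝ) ≤ x := Real.one_le_rpow hi1R hα0.le
  have hxpos : 0 < x := lt_of_lt_of_le one_pos hx1
  have hfl1 : 1 ≤ ⌊x⌋₊ := Nat.one_le_floor_iff x |>.mpr hx1
  have hfl1R : (1:ℝ) ≤ (⌊x⌋₊ : ℝ) := by exact_mod_cast hfl1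
  have hflle : (⌊x⌋₊ : ℝ) ≤ x := Nat.floor_le hxpos.le
  -- x ≤ i since α ≤ 1
  have hxlei : x ≤ (i:ℝ) := by
    calc x ≤ (i:ℝ) ^ (1:ℝ) := Real.rpow_le_rpow_of_exponent_le hi1R hα1
    _ = (i:ℝ) := Real.rpow_one _
  -- η < 2 i
  have hη2i : (η:ℝ) < 2 * (i:ℝ) := by
    have h1 : (η:ℝ) < (i:ℝ) + (⌊x⌋₊ : ℝ) := by
      have : η < i + ⌊x⌋₊ := by
        have h := sp_succ α q
        rw [← hi, ← hx] at h
        omega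
      exact_mod_cast this
    linarith
  have hηpos : (0:ℝ) < (η:ℝ) := by
    have : 1 ≤ η := le_trans hi1 hηl
    exact_mod_cast this
  have hηα_pos : 0 < (η:ℝ) ^ α := Real.rpow_pos_of_pos hηpos α
  have hiη : (i:ℝ) ≤ (η:ℝ) := by exact_mod_cast hηl
  -- upper bound
  have hup : (⌊x⌋₊ : ℝ) / (η:ℝ) ^ α ≤ 1 := by
    rw [div_le_one hηα_pos]
    calc (⌊x⌋₊ : ℝ) ≤ x := hflle
    _ ≤ (η:ℝ) ^ α := Real.rpow_le_rpow (by linarith) hiη hα0.le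
  refine ⟨?_, hup⟩
  -- lower bound
  have hfl_half : x / 2 ≤ (⌊x⌋₊ : ℝ) := by
    have := Nat.lt_floor_add_one x
    linarith
  have hden : (η:ℝ) ^ α ≤ 2 ^ α * x := by
    calc (η:ℝ) ^ α ≤ (2 * (i:ℝ)) ^ α :=
          Real.rpow_le_rpow hηpos.le hη2i.le hα0.le
    _ = 2 ^ α * x := Real.mul_rpow (by norm_num) (by positivity)
  have h2α : (0:ℝ) < 2 ^ α * x := by positivity
  have key : (x / 2) / (2 ^ α * x) ≤ (⌊x⌋₊ : ℝ) / (η:ℝ) ^ α :=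
    div_le_div₀ (by linarith) hfl_half hηα_pos hden
  calc (2:ℝ) ^ (-(α + 1)) = (x / 2) / (2 ^ α * x) := by
        rw [Real.rpow_neg (by norm_num), Real.rpow_add (by norm_num), Real.rpow_one]
        field_simp
  _ ≤ _ := key
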